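/- Let X be a finite set with |X| ≥ 2. For every cluster system C for X, the adjoint C* is a saturated patchwork that contains C_triv. -/

import Mathlib

/-- Two subsets `A`, `B` are compatible if `A ∩ B ∈ {∅, A, B}`. -/
def Compatible {α : Type*} [DecidableEq α] (A B : Finset α) : Prop :=
  A ∩ B = ∅ ∨ A ∩ B = A ∨ A ∩ B = B

/-- A cluster system: a collection of non-empty subsets of `X`. -/
def IsCS {α : Type*} [DecidableEq α] (C : Set (Finset α)) : Prop :=
  ∀ A ∈ C, A.Nonempty

/-- The adjoint `C*`: all non-empty subsets of `X` compatible with every member of `C`. -/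
def adjS {α : Type*} [DecidableEq α] (C : Set (Finset α)) : Set (Finset α) :=
  {A | A.Nonempty ∧ ∀ B ∈ C, Compatible A B}

/-- A hierarchy: a cluster system whose members are pairwise compatible. -/
def IsHierarchyS {α : Type*} [DecidableEq α] (C : Set (Finset α)) : Prop :=
  IsCS C ∧ ∀ A ∈ C, ∀ B ∈ C, Compatible A B

/-- A maximal hierarchy: a hierarchy not properly contained in any other hierarchy. -/
def IsMaxHierarchyS {α : Type*} [DecidableEq α] (H : Set (Finset α)) : Prop :=
  IsHierarchyS H ∧ ∀ D : Set (Finset α), IsHierarchyS D → H ⊆ D → D = H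

/-- A weak patchwork: incompatible members have their union in the system. -/
def IsWeakPW {α : Type*} [DecidableEq α] (C : Set (Finset α)) : Prop :=
  ∀ A ∈ C, ∀ B ∈ C, ¬Compatible A B → A ∪ B ∈ C

/-- A patchwork: incompatible members have both intersection and union in the system. -/
def IsPW {α : Type*} [DecidableEq α] (C : Set (Finset α)) : Prop :=
  ∀ A ∈ C, ∀ B ∈ C, ¬Compatible A B → A ∩ B ∈ C ∧ A ∪ B ∈ C

/-- A saturated patchwork: for incompatible members `A`, `B`, the five sets
`A ∩ B`, `A ∪ B`, `A - B`, `B - A`, `(A ∪ B) - (A ∩ B)` lie in the system. -/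
def IsSatPW {α : Type*} [DecidableEq α] (C : Set (Finset α)) : Prop :=
  ∀ A ∈ C, ∀ B ∈ C, ¬Compatible A B →
    A ∩ B ∈ C ∧ A ∪ B ∈ C ∧ A \ B ∈ C ∧ B \ A ∈ C ∧ (A ∪ B) \ (A ∩ B) ∈ C

/-- The trivial cluster system: all singletons together with `X` itself. -/
def CtrivS (α : Type*) [Fintype α] [DecidableEq α] : Set (Finset α) :=
  {A | (∃ x : α, A = {x}) ∨ A = Finset.univ}

/-- `C` is ample: for every arc `(C₂, C₁)` of the Hasse diagram (i.e. `C₂ ⊊ C₁`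
with nothing of `C` strictly between), `C₁ - C₂ ∈ C`. -/
def IsAmpleS {α : Type*} [DecidableEq α] (C : Set (Finset α)) : Prop :=
  ∀ C₁ ∈ C, ∀ C₂ ∈ C, C₂ ⊂ C₁ → (∀ B ∈ C, ¬(C₂ ⊂ B ∧ B ⊂ C₁)) → C₁ \ C₂ ∈ C

lemma compat_of_disjoint {α : Type*} [DecidableEq α] {A B : Finset α} (h : Disjoint A B) :
    Compatible A B := Or.inl (Finset.disjoint_iff_inter_eq_empty.mp h)

lemma compat_of_subset {α : Type*} [DecidableEq α] {A B : Finset α} (h : A ⊆ B) :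
    Compatible A B := Or.inr (Or.inl (Finset.inter_eq_left.mpr h))

lemma compat_of_superset {α : Type*} [DecidableEq α] {A B : Finset α} (h : B ⊆ A) :
    Compatible A B := Or.inr (Or.inr (Finset.inter_eq_right.mpr h))

lemma compat_cases {α : Type*} [DecidableEq α] {A B : Finset α} (h : Compatible A B) :
    Disjoint A B ∨ A ⊆ B ∨ B ⊆ A := by
  rcases h with h | h | h
  · exact Or.inl (Finset.disjoint_iff_inter_eq_empty.mpr h)
  · exact Or.inr (Or.inl (Finset.inter_eq_left.mp h))
  · exact Or.inr (Or.inr (Finset.inter_eq_right.mp h))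

lemma five_compat {α : Type*} [DecidableEq α] {D A B : Finset α}
    (hDA : Compatible D A) (hDB : Compatible D B)
    (hne : (A ∩ B).Nonempty) (hAB : ¬A ⊆ B) (hBA : ¬B ⊆ A) :
    Compatible D (A ∩ B) ∧ Compatible D (A ∪ B) ∧ Compatible D (A \ B) ∧
      Compatible D (B \ A) ∧ Compatible D ((A ∪ B) \ (A ∩ B)) := by
  obtain ⟨x, hx⟩ := hne
  have hxA : x ∈ A := (Finset.mem_inter.mp hx).1
  have hxB : x ∈ B := (Finset.mem_inter.mp hx).2
  rcases compat_cases hDA with hA | hA | hA <;> rcases compat_cases hDB with hB | hB | hB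
  · -- disjoint, disjoint
    refine ⟨compat_of_disjoint ?_, compat_of_disjoint ?_, compat_of_disjoint ?_,
      compat_of_disjoint ?_, compat_of_disjoint ?_⟩
    · exact hA.mono_right Finset.inter_subset_left
    · exact Finset.disjoint_union_right.mpr ⟨hA, hB⟩
    · exact hA.mono_right Finset.sdiff_subset
    · exact hB.mono_right Finset.sdiff_subset
    · exact (Finset.disjoint_union_right.mpr ⟨hA, hB⟩).mono_right Finset.sdiff_subset
  · -- disjoint A, D ⊆ B : D ⊆ B \ A
    have hsub : D ⊆ B \ A := Finset.subset_sdiff.mpr ⟨hB, hA⟩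
    refine ⟨compat_of_disjoint (hA.mono_right Finset.inter_subset_left),
      compat_of_subset (hB.trans Finset.subset_union_right),
      compat_of_disjoint (hA.mono_right Finset.sdiff_subset),
      compat_of_subset hsub,
      compat_of_subset (hsub.trans (Finset.sdiff_subset_sdiff
        Finset.subset_union_right Finset.inter_subset_left))⟩
  · -- disjoint A, B ⊆ D : contradiction
    exact absurd (hB hxB) (Finset.disjoint_right.mp hA hxA)
  · -- D ⊆ A, disjoint B : D ⊆ A \ B
    have hsub : D ⊆ A \ B := Finset.subset_sdiff.mpr ⟨hA, hB⟩
    refine ⟨compat_of_disjoint (hB.mono_right Finset.inter_subset_right),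
      compat_of_subset (hA.trans Finset.subset_union_left),
      compat_of_subset hsub,
      compat_of_disjoint (hB.mono_right Finset.sdiff_subset),
      compat_of_subset (hsub.trans (Finset.sdiff_subset_sdiff
        Finset.subset_union_left Finset.inter_subset_right))⟩
  · -- D ⊆ A, D ⊆ B
    have hsub : D ⊆ A ∩ B := Finset.subset_inter hA hB
    have hdis : Disjoint D ((A ∪ B) \ (A ∩ B)) :=
      Finset.disjoint_sdiff.mono_left hsub
    refine ⟨compat_of_subset hsub,
      compat_of_subset (hA.trans Finset.subset_union_left),
      compat_of_disjoint ?_, compat_of_disjoint ?_, compat_of_disjoint hdis⟩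
    · exact hdis.mono_right (Finset.sdiff_subset_sdiff Finset.subset_union_left
        Finset.inter_subset_right)
    · exact hdis.mono_right (Finset.sdiff_subset_sdiff Finset.subset_union_right
        Finset.inter_subset_left)
  · -- D ⊆ A, B ⊆ D : B ⊆ A, contradiction
    exact absurd (hB.trans hA) hBA
  · -- A ⊆ D, disjoint B : contradiction
    exact absurd hxB (Finset.disjoint_left.mp hB (hA hxA))
  · -- A ⊆ D, D ⊆ B : A ⊆ B, contradiction
    exact absurd (hA.trans hB) hAB
  · -- A ⊆ D, B ⊆ D : all five ⊆ D
    refine ⟨compat_of_superset (Finset.inter_subset_left.trans hA),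
      compat_of_superset (Finset.union_subset hA hB),
      compat_of_superset (Finset.sdiff_subset.trans hA),
      compat_of_superset (Finset.sdiff_subset.trans hB),
      compat_of_superset (Finset.sdiff_subset.trans (Finset.union_subset hA hB))⟩

/-- The adjoint of any cluster system is a saturated patchwork containing `C_triv`. -/
theorem stmt7 {α : Type*} [Fintype α] [DecidableEq α] (hcard : 2 ≤ Fintype.card α)
    (C : Set (Finset α)) (hC : IsCS C) :
    IsSatPW (adjS C) ∧ CtrivS α ⊆ adjS C := by
  constructor
  · intro A hA B hB hnc
    obtain ⟨hAne, hAcomp⟩ := hA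
    obtain ⟨hBne, hBcomp⟩ := hB
    unfold Compatible at hnc
    push_neg at hnc
    obtain ⟨h1, h2, h3⟩ := hnc
    have hne : (A ∩ B).Nonempty := h1
    have hAB : ¬A ⊆ B := fun h => h2 (Finset.inter_eq_left.mpr h)
    have hBA : ¬B ⊆ A := fun h => h3 (Finset.inter_eq_right.mpr h)
    have hAsB : (A \ B).Nonempty := Finset.sdiff_nonempty.mpr hAB
    have hBsA : (B \ A).Nonempty := Finset.sdiff_nonempty.mpr hBA
    have key : ∀ D ∈ C, Compatible D (A ∩ B) ∧ Compatible D (A ∪ B) ∧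
        Compatible D (A \ B) ∧ Compatible D (B \ A) ∧
        Compatible D ((A ∪ B) \ (A ∩ B)) := by
      intro D hD
      have cDA : Compatible D A := by
        rcases compat_cases (hAcomp D hD) with h | h | h
        · exact compat_of_disjoint h.symm
        · exact compat_of_superset h
        · exact compat_of_subset h
      have cDB : Compatible D B := by
        rcases compat_cases (hBcomp D hD) with h | h | h
        · exact compat_of_disjoint h.symm
        · exact compat_of_superset h
        · exact compat_of_subset h
      exact five_compat cDA cDB hne hAB hBA
    have comm : ∀ {S : Finset α}, (∀ D ∈ C, Compatible D S) → ∀ D ∈ C, Compatible S D := by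
      intro S h D hD
      rcases compat_cases (h D hD) with hh | hh | hh
      · exact compat_of_disjoint hh.symm
      · exact compat_of_superset hh
      · exact compat_of_subset hh
    refine ⟨⟨hne, comm fun D hD => (key D hD).1⟩,
      ⟨hAne.mono Finset.subset_union_left, comm fun D hD => (key D hD).2.1⟩,
      ⟨hAsB, comm fun D hD => (key D hD).2.2.1⟩,
      ⟨hBsA, comm fun D hD => (key D hD).2.2.2.1⟩,
      ⟨hAsB.mono (Finset.sdiff_subset_sdiff Finset.subset_union_left
        Finset.inter_subset_right), comm fun D hD => (key D hD).2.2.2.2⟩⟩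
  · rintro A (⟨x, rfl⟩ | rfl)
    · refine ⟨Finset.singleton_nonempty x, fun B _ => ?_⟩
      by_cases hx : x ∈ B
      · exact compat_of_subset (Finset.singleton_subset_iff.mpr hx)
      · exact compat_of_disjoint (Finset.disjoint_singleton_left.mpr hx)
    · have : Nontrivial α := Fintype.one_lt_card_iff_nontrivial.mp hcard
      exact ⟨Finset.univ_nonempty, fun B _ => compat_of_superset (Finset.subset_univ B)⟩
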